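/- If X_1,...,X_n are (possibly dependent) random variables uniformly distributed on [0,1] and 0 < s ≤ n/2, then E[N(n,s)] ≤ √(2sn). -/
import Mathlib


open MeasureTheory ProbabilityTheory Finset Set
open scoped Classical

/-- BRS bound for uniform marginals: if `X 1, …, X n` are (possibly dependent)
random variables each uniformly distributed on `[0,1]` and `0 < s ≤ n/2`, then
`E[N(n,s)] ≤ √(2 s n)`. -/
theorem brs_uniform_bound
    {Ω : Type*} [MeasureSpace Ω] [IsProbabilityMeasure (ℙ : Measure Ω)]
    (n : ℕ) (s : ℝ) (hs : 0 < s) (hs2 : s ≤ n / 2)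
    (X : Fin n → Ω → ℝ) (hXmeas : ∀ k, Measurable (X k))
    (hlaw : ∀ k, Measure.map (X k) ℙ = volume.restrict (Icc (0:ℝ) 1))
    (N : Ω → ℕ)
    (hN : ∀ ω, N ω = ((Finset.univ.powerset.filter
      (fun A : Finset (Fin n) => ∑ i ∈ A, X i ω ≤ s)).sup Finset.card)) :
    ∫ ω, (N ω : ℝ) ≤ Real.sqrt (2 * s * n) := by
  have hn : 0 < (n:ℝ) := by
    rcases Nat.eq_zero_or_pos n with h | h
    · subst h; simp at hs2; linarith
    · exact_mod_cast h
  set u := Real.sqrt (2*s*n) with hu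
  have hu2 : u^2 = 2*s*n := Real.sq_sqrt (by positivity)
  have hupos : 0 < u := Real.sqrt_pos.2 (by positivity)
  set t := u / n with ht
  have htpos : 0 < t := div_pos hupos hn
  have ht1 : t ≤ 1 := by
    rw [ht, div_le_one hn]
    have h1 : u ≤ Real.sqrt ((n:ℝ)^2) := Real.sqrt_le_sqrt (by nlinarith)
    rwa [Real.sqrt_sq hn.le] at h1
  set g : ℝ → ℝ := fun y => max 0 (t - y) with hg
  have hgc : Continuous g := by fun_prop
  -- the integral of g over [0,1]
  have hint1 : ∫ y in (0:ℝ)..t, g y = t^2/2 := by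
    have heq : Set.EqOn g (fun y => t - y) (Set.uIcc 0 t) := by
      intro y hy
      rw [Set.uIcc_of_le htpos.le] at hy
      exact max_eq_right (by linarith [hy.2])
    rw [intervalIntegral.integral_congr heq,
      intervalIntegral.integral_sub intervalIntegrable_const
        intervalIntegral.intervalIntegrable_id,
      intervalIntegral.integral_const, integral_id]
    simp; ring
  have hint2 : ∫ y in t..(1:ℝ), g y = 0 := by
    have heq : Set.EqOn g (fun _ => (0:ℝ)) (Set.uIcc t 1) := by
      intro y hy
      rw [Set.uIcc_of_le ht1] at hy
      exact max_eq_left (by linarith [hy.1])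
    rw [intervalIntegral.integral_congr heq]
    simp
  have hgint : ∫ y in Icc (0:ℝ) 1, g y = t^2/2 := by
    rw [MeasureTheory.integral_Icc_eq_integral_Ioc,
      ← intervalIntegral.integral_of_le (by norm_num : (0:ℝ) ≤ 1),
      ← intervalIntegral.integral_add_adjacent_intervals
        (hgc.intervalIntegrable 0 t) (hgc.intervalIntegrable t 1),
      hint1, hint2, add_zero]
  -- integrability and value of composition
  have hcomp : ∀ k, Integrable (fun ω => g (X k ω)) ℙ := by
    intro k
    have h1 : Integrable g (Measure.map (X k) ℙ) := by
      rw [hlaw k]; exact hgc.integrableOn_Icc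
    exact (integrable_map_measure hgc.aestronglyMeasurable
      (hXmeas k).aemeasurable).1 h1
  have hcompval : ∀ k, ∫ ω, g (X k ω) ∂ℙ = t^2/2 := by
    intro k
    have h1 := MeasureTheory.integral_map (μ := ℙ) (hXmeas k).aemeasurable
      (f := g) hgc.aestronglyMeasurable
    rw [hlaw k] at h1
    rw [← h1]
    exact hgint
  -- pointwise bound
  have hpt : ∀ ω, (N ω : ℝ) * t ≤ s + ∑ k, g (X k ω) := by
    intro ω
    set 𝒜 := Finset.univ.powerset.filter
      (fun A : Finset (Fin n) => ∑ i ∈ A, X i ω ≤ s) with h𝒜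
    have hne : 𝒜.Nonempty := ⟨∅, by simp [h𝒜, hs.le]⟩
    obtain ⟨A, hA, hsup⟩ := Finset.exists_mem_eq_sup 𝒜 hne Finset.card
    have hAs : ∑ i ∈ A, X i ω ≤ s := (Finset.mem_filter.1 hA).2
    have hNA : (N ω : ℝ) = A.card := by rw [hN ω, ← h𝒜, hsup]
    have h2 : ∀ i, t ≤ X i ω + g (X i ω) := by
      intro i
      rcases le_total (X i ω) t with h | h
      · have : g (X i ω) = t - X i ω := max_eq_right (by linarith)
        linarith
      · have : (0:ℝ) ≤ g (X i ω) := le_max_left _ _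
        linarith
    calc (N ω : ℝ) * t = ∑ _i ∈ A, t := by rw [hNA]; simp [mul_comm]
      _ ≤ ∑ i ∈ A, (X i ω + g (X i ω)) := Finset.sum_le_sum (fun i _ => h2 i)
      _ = ∑ i ∈ A, X i ω + ∑ i ∈ A, g (X i ω) := Finset.sum_add_distrib
      _ ≤ s + ∑ k, g (X k ω) := add_le_add hAs
          (Finset.sum_le_sum_of_subset_of_nonneg (Finset.subset_univ A)
            (fun i _ _ => le_max_left _ _))
  have hSint : Integrable (fun ω => s + ∑ k, g (X k ω)) ℙ :=
    (integrable_const s).add (integrable_finset_sum _ (fun k _ => hcomp k))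
  calc ∫ ω, (N ω : ℝ)
      ≤ ∫ ω, (s + ∑ k, g (X k ω)) / t := by
        apply integral_mono_of_nonneg
        · exact Filter.Eventually.of_forall (fun ω => by positivity)
        · exact hSint.div_const t
        · exact Filter.Eventually.of_forall
            (fun ω => (le_div_iff₀ htpos).2 (hpt ω))
    _ = (∫ ω, (s + ∑ k, g (X k ω))) / t := integral_div t _
    _ = (s + ∑ k : Fin n, ∫ ω, g (X k ω)) / t := by
        rw [integral_add (integrable_const s)
          (integrable_finset_sum _ (fun k _ => hcomp k)),
          integral_const, integral_finset_sum _ (fun k _ => hcomp k)]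
        simp
    _ = (s + n * (t^2/2)) / t := by
        simp [hcompval, Finset.sum_const, mul_comm]
    _ = u := by
        rw [ht]
        field_simp
        nlinarith [hu2, hupos, hn]
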